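/- Let p be prime. If p ≡ 3 (mod 8), then the Edwards curve with coefficient d = 2 has N_2 = p + 1 affine points over F_p; if p ≡ 7 (mod 8), then N_2 = p − 3. -/

import Mathlib

open Finset

section EdwardsAux

variable {p : ℕ} [Fact p.Prime]

private lemma sumSq (hF : ringChar (ZMod p) ≠ 2) (g : ZMod p → ℤ) :
    ∑ x : ZMod p, g (x ^ 2) = ∑ u : ZMod p, (quadraticChar (ZMod p) u + 1) * g u := by
  classical
  have h1 : ∀ u : ZMod p, ((quadraticChar (ZMod p) u + 1 : ℤ)) * g u
      = ∑ x ∈ univ.filter (fun x : ZMod p => x ^ 2 = u), g u := by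
    intro u
    rw [Finset.sum_const, ← quadraticChar_card_sqrts hF u]
    · rw [nsmul_eq_mul]
      congr 1
      norm_cast
      rw [Set.toFinset_setOf]
  rw [Finset.sum_congr rfl fun u _ => h1 u]
  exact (Finset.sum_fiberwise' univ (fun x : ZMod p => x ^ 2) g).symm

private lemma chi_inv {a : ZMod p} (ha : a ≠ 0) :
    quadraticChar (ZMod p) a⁻¹ = quadraticChar (ZMod p) a := by
  have hsq : quadraticChar (ZMod p) a * quadraticChar (ZMod p) a = 1 := by
    rw [← pow_two]; exact quadraticChar_sq_one ha
  have hne : quadraticChar (ZMod p) a ≠ 0 := fun hz => by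
    rw [hz, mul_zero] at hsq; exact one_ne_zero hsq.symm
  apply mul_right_cancel₀ hne
  rw [← map_mul, inv_mul_cancel₀ ha, map_one, hsq]

private lemma erase_sum (hF : ringChar (ZMod p) ≠ 2)
    (hneg : quadraticChar (ZMod p) (-1) = -1) :
    (∑ u ∈ univ.erase ((2:ZMod p)⁻¹),
      (quadraticChar (ZMod p) u + 1) *
        (quadraticChar (ZMod p) ((1 - u) * (1 - 2 * u)⁻¹) + 1))
    = (p : ℤ) - 1 - 2 * quadraticChar (ZMod p) 2 := by
  classical
  set χ := quadraticChar (ZMod p) with hχdef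
  have h2 : (2 : ZMod p) ≠ 0 := Ring.two_ne_zero hF
  have h2inv : (2 : ZMod p) * 2⁻¹ = 1 := mul_inv_cancel₀ h2
  set s := univ.erase ((2:ZMod p)⁻¹) with hs
  have hmem : ∀ u ∈ s, (1 : ZMod p) - 2 * u ≠ 0 := by
    intro u hu h
    exact (Finset.mem_erase.mp hu).1
      ((inv_eq_of_mul_eq_one_right (by linear_combination -h)).symm)
  -- expansion
  have expand : ∀ u ∈ s, (χ u + 1) * (χ ((1 - u) * (1 - 2 * u)⁻¹) + 1)
      = χ (u * (1 - u) * (1 - 2 * u)) + χ u + χ ((1 - u) * (1 - 2 * u)⁻¹) + 1 := by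
    intro u hu
    have h1u := hmem u hu
    have e : χ ((1 - u) * (1 - 2 * u)⁻¹) = χ (1 - u) * χ (1 - 2 * u) := by
      rw [map_mul, chi_inv h1u]
    calc (χ u + 1) * (χ ((1 - u) * (1 - 2 * u)⁻¹) + 1)
        = χ u * χ ((1 - u) * (1 - 2 * u)⁻¹) + χ u + χ ((1 - u) * (1 - 2 * u)⁻¹) + 1 := by
          ring
      _ = _ := by rw [e, map_mul χ, map_mul χ]; ring
  rw [Finset.sum_congr rfl expand, Finset.sum_add_distrib, Finset.sum_add_distrib,
    Finset.sum_add_distrib]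
  -- sum A
  have hA : ∑ u ∈ s, χ (u * (1 - u) * (1 - 2 * u)) = 0 := by
    have hzero : χ ((2:ZMod p)⁻¹ * (1 - 2⁻¹) * (1 - 2 * 2⁻¹)) = 0 := by
      rw [show (1 : ZMod p) - 2 * 2⁻¹ = 0 by rw [h2inv]; ring, mul_zero, hχdef,
        quadraticChar_zero]
    have hall : ∑ u : ZMod p, χ (u * (1 - u) * (1 - 2 * u)) = 0 := by
      have hrev : ∑ u : ZMod p, χ ((1 - u) * (1 - (1 - u)) * (1 - 2 * (1 - u)))
          = ∑ u : ZMod p, χ (u * (1 - u) * (1 - 2 * u)) :=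
        Fintype.sum_equiv (Equiv.subLeft (1 : ZMod p)) _ _ (fun u => rfl)
      have hpt : ∀ u : ZMod p, χ ((1 - u) * (1 - (1 - u)) * (1 - 2 * (1 - u)))
          = -χ (u * (1 - u) * (1 - 2 * u)) := by
        intro u
        rw [show (1 - u) * (1 - (1 - u)) * (1 - 2 * (1 - u))
          = -1 * (u * (1 - u) * (1 - 2 * u)) by ring, map_mul, hneg]
        ring
      rw [Finset.sum_congr rfl fun u _ => hpt u] at hrev
      rw [Finset.sum_neg_distrib] at hrev
      linarith
    rw [hs, Finset.sum_erase_eq_sub (mem_univ _), hall, hzero, sub_zero]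
  -- sum B
  have hB : ∑ u ∈ s, χ u = -χ 2 := by
    rw [hs, Finset.sum_erase_eq_sub (mem_univ _), quadraticChar_sum_zero hF,
      chi_inv h2]
    ring
  -- sum C
  have hC : ∑ u ∈ s, χ ((1 - u) * (1 - 2 * u)⁻¹) = -χ 2 := by
    rw [← hB]
    apply Finset.sum_nbij' (fun u => (1 - u) * (1 - 2 * u)⁻¹)
      (fun u => (1 - u) * (1 - 2 * u)⁻¹)
    · intro u hu
      have h1u := hmem u hu
      refine Finset.mem_erase.mpr ⟨?_, mem_univ _⟩
      intro h
      rw [mul_inv_eq_iff_eq_mul₀ h1u] at h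
      exact one_ne_zero (α := ZMod p) (by linear_combination 2 * h + (1 - 2*u) * h2inv)
    · intro u hu
      have h1u := hmem u hu
      refine Finset.mem_erase.mpr ⟨?_, mem_univ _⟩
      intro h
      rw [mul_inv_eq_iff_eq_mul₀ h1u] at h
      exact one_ne_zero (α := ZMod p) (by linear_combination 2 * h + (1 - 2*u) * h2inv)
    · intro u hu
      have h1u := hmem u hu
      have hmu_eq : (1 : ZMod p) - 2 * ((1 - u) * (1 - 2 * u)⁻¹) = -(1 - 2 * u)⁻¹ := by
        field_simp
        ring
      rw [hmu_eq, show (1 : ZMod p) - (1 - u) * (1 - 2 * u)⁻¹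
        = -u * (1 - 2 * u)⁻¹ from by field_simp; linear_combination -(mul_inv_cancel₀ h1u), inv_neg, inv_inv]
      field_simp
      linear_combination u * mul_inv_cancel₀ h1u
    · intro u hu
      have h1u := hmem u hu
      have hmu_eq : (1 : ZMod p) - 2 * ((1 - u) * (1 - 2 * u)⁻¹) = -(1 - 2 * u)⁻¹ := by
        field_simp
        ring
      rw [hmu_eq, show (1 : ZMod p) - (1 - u) * (1 - 2 * u)⁻¹
        = -u * (1 - 2 * u)⁻¹ from by field_simp; linear_combination -(mul_inv_cancel₀ h1u), inv_neg, inv_inv]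
      field_simp
      linear_combination u * mul_inv_cancel₀ h1u
    · intro u hu
      rfl
  -- sum D
  have hD : ∑ u ∈ s, (1 : ℤ) = (p : ℤ) - 1 := by
    rw [Finset.sum_const, hs, Finset.card_erase_of_mem (mem_univ _), card_univ,
      ZMod.card, nsmul_eq_mul, mul_one]
    have hp1 : 1 ≤ p := (Fact.out : p.Prime).one_lt.le
    push_cast [hp1]
    ring
  rw [hA, hB, hC, hD]
  ring

private lemma edwards_key (hF : ringChar (ZMod p) ≠ 2) (hp4 : p % 4 = 3) :
    (Nat.card {xy : ZMod p × ZMod p //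
        xy.1 ^ 2 + xy.2 ^ 2 = 1 + 2 * xy.1 ^ 2 * xy.2 ^ 2} : ℤ)
      = (p : ℤ) - 1 - 2 * quadraticChar (ZMod p) 2 := by
  classical
  set χ := quadraticChar (ZMod p) with hχdef
  have h2 : (2 : ZMod p) ≠ 0 := Ring.two_ne_zero hF
  have hneg : χ (-1) = -1 := by
    apply quadraticChar_neg_one_iff_not_isSquare.mpr
    rw [ZMod.exists_sq_eq_neg_one_iff]
    simp [hp4]
  -- step 1 : card as a double sum of indicators
  have e1 : (Nat.card {xy : ZMod p × ZMod p //
        xy.1 ^ 2 + xy.2 ^ 2 = 1 + 2 * xy.1 ^ 2 * xy.2 ^ 2} : ℤ)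
      = ∑ x : ZMod p, ∑ y : ZMod p,
          (if x ^ 2 + y ^ 2 = 1 + 2 * x ^ 2 * y ^ 2 then (1 : ℤ) else 0) := by
    rw [Nat.card_eq_fintype_card, Fintype.card_subtype, Finset.card_filter]
    push_cast
    rw [Fintype.sum_prod_type]
  -- step 2 : replace squares by character weights
  have e2 : (∑ x : ZMod p, ∑ y : ZMod p,
          (if x ^ 2 + y ^ 2 = 1 + 2 * x ^ 2 * y ^ 2 then (1 : ℤ) else 0))
      = ∑ u : ZMod p, (χ u + 1) * ∑ v : ZMod p, (χ v + 1) *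
          (if u + v = 1 + 2 * u * v then (1 : ℤ) else 0) := by
    rw [Finset.sum_congr rfl fun x _ =>
      sumSq hF (fun v => if x ^ 2 + v = 1 + 2 * x ^ 2 * v then (1 : ℤ) else 0)]
    exact sumSq hF (fun u => ∑ v : ZMod p, (χ v + 1) *
      (if u + v = 1 + 2 * u * v then (1 : ℤ) else 0))
  -- step 3 : evaluate the inner sum
  have e3 : ∀ u : ZMod p, (χ u + 1) * (∑ v : ZMod p, (χ v + 1) *
          (if u + v = 1 + 2 * u * v then (1 : ℤ) else 0))
      = if u = 2⁻¹ then 0 else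
          (χ u + 1) * (χ ((1 - u) * (1 - 2 * u)⁻¹) + 1) := by
    intro u
    by_cases hu : u = 2⁻¹
    · subst hu
      rw [if_pos rfl]
      have : ∀ v : ZMod p, ((2 : ZMod p)⁻¹ + v = 1 + 2 * 2⁻¹ * v) ↔ False := by
        intro v
        simp only [mul_inv_cancel₀ h2, one_mul, iff_false]
        intro h
        have h1 : ((2 : ZMod p))⁻¹ = 1 := by linear_combination h
        have h2' : (1 : ZMod p) = 0 := by
          have := congrArg (fun t => (2 : ZMod p) * t) h1
          simp only [mul_inv_cancel₀ h2, mul_one] at this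
          linear_combination -this
        exact one_ne_zero h2'
      simp only [this, if_false, mul_zero, Finset.sum_const_zero]
    · rw [if_neg hu]
      have h1u : (1 : ZMod p) - 2 * u ≠ 0 := by
        intro h
        exact hu ((inv_eq_of_mul_eq_one_right (by linear_combination -h)).symm)
      congr 1
      have hcond : ∀ v : ZMod p,
          (u + v = 1 + 2 * u * v) ↔ v = (1 - u) * (1 - 2 * u)⁻¹ := by
        intro v
        rw [eq_mul_inv_iff_mul_eq₀ h1u]
        constructor <;> intro h <;> linear_combination h
      simp only [hcond, mul_ite, mul_one, mul_zero]
      rw [Finset.sum_ite_eq' univ ((1 - u) * (1 - 2 * u)⁻¹) (fun v => χ v + 1)]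
      simp
  rw [e1, e2, Finset.sum_congr rfl fun u _ => e3 u]
  -- step 4 : restrict to the erase set and conclude
  rw [show (∑ u : ZMod p, if u = 2⁻¹ then (0:ℤ) else
        (χ u + 1) * (χ ((1 - u) * (1 - 2 * u)⁻¹) + 1))
      = ∑ u ∈ univ.erase ((2:ZMod p)⁻¹),
        (χ u + 1) * (χ ((1 - u) * (1 - 2 * u)⁻¹) + 1) from ?_]
  · exact erase_sum hF hneg
  · rw [Finset.sum_ite, Finset.sum_const_zero, zero_add, Finset.filter_ne']

end EdwardsAux

/-- The number of affine points of the Edwards curve `x² + y² = 1 + d x² y²` over `ZMod p`. -/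
noncomputable def edwardsCard (p : ℕ) (d : ZMod p) : ℕ :=
  Nat.card {xy : ZMod p × ZMod p // xy.1 ^ 2 + xy.2 ^ 2 = 1 + d * xy.1 ^ 2 * xy.2 ^ 2}

theorem stmt4 (p : ℕ) [Fact p.Prime] :
    (p % 8 = 3 → edwardsCard p (2 : ZMod p) = p + 1) ∧
    (p % 8 = 7 → edwardsCard p (2 : ZMod p) = p - 3) := by
  constructor <;> intro h
  · have hp2 : p ≠ 2 := by omega
    have hF : ringChar (ZMod p) ≠ 2 := by rw [ZMod.ringChar_zmod_n]; exact hp2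
    have hp4 : p % 4 = 3 := by omega
    have key := edwards_key (p := p) hF hp4
    have hχ2 : quadraticChar (ZMod p) 2 = -1 :=
      quadraticChar_neg_one_iff_not_isSquare.mpr
        (by rw [ZMod.exists_sq_eq_two_iff hp2]; omega)
    have : (edwardsCard p (2 : ZMod p) : ℤ) = (p : ℤ) + 1 := by
      unfold edwardsCard
      rw [key, hχ2]
      ring
    exact_mod_cast this
  · have hp2 : p ≠ 2 := by omega
    have hF : ringChar (ZMod p) ≠ 2 := by rw [ZMod.ringChar_zmod_n]; exact hp2
    have hp4 : p % 4 = 3 := by omega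
    have key := edwards_key (p := p) hF hp4
    have hχ2 : quadraticChar (ZMod p) 2 = 1 :=
      (quadraticChar_one_iff_isSquare (Ring.two_ne_zero hF)).mpr
        ((ZMod.exists_sq_eq_two_iff hp2).mpr (Or.inr h))
    have hcast : (edwardsCard p (2 : ZMod p) : ℤ) = (p : ℤ) - 3 := by
      unfold edwardsCard
      rw [key, hχ2]
      ring
    have hp7 : 7 ≤ p := by
      rcases Nat.lt_or_ge p 7 with hlt | hge
      · interval_cases p <;> omega
      · exact hge
    omega
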